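/- Let A be a symmetric positive definite n×n real matrix, C a symmetric positive definite n×n real matrix, B an n×n real matrix, and Λ an n×n real matrix satisfying Λ A⁻¹ Λᵀ = C. Define S = C + B A⁻¹ Bᵀ and Ŝ = (B + Λ) A⁻¹ (B + Λ)ᵀ. Then the matrix S − (1/2) Ŝ is symmetric positive semidefinite; equivalently, xᵀ S x ≥ (1/2) xᵀ Ŝ x for every x ∈ ℝⁿ. -/

import Mathlib

open Matrix

/-- Matching strategy lower bound: if `Lam A⁻¹ Lamᵀ = C`, then with
`S = C + B A⁻¹ Bᵀ` and `Shat = (B + Lam) A⁻¹ (B + Lam)ᵀ`, the matrix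
`S - (1/2) Shat` is symmetric positive semidefinite; equivalently
`xᵀ S x ≥ (1/2) xᵀ Shat x` for all `x`. -/
theorem matching_strategy_half_lower_bound (n : ℕ)
    (A C B Lam : Matrix (Fin n) (Fin n) ℝ)
    (hA : A.PosDef) (hC : C.PosDef)
    (hLam : Lam * A⁻¹ * Lamᵀ = C)
    (S Shat : Matrix (Fin n) (Fin n) ℝ)
    (hS : S = C + B * A⁻¹ * Bᵀ)
    (hShat : Shat = (B + Lam) * A⁻¹ * (B + Lam)ᵀ) :
    (S - (1 / 2 : ℝ) • Shat).PosSemidef ∧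
      ∀ x : Fin n → ℝ,
        (1 / 2 : ℝ) * (x ⬝ᵥ Shat.mulVec x) ≤ x ⬝ᵥ S.mulVec x := by
  have key : S - (1 / 2 : ℝ) • Shat
      = (1 / 2 : ℝ) • ((B - Lam) * A⁻¹ * (B - Lam)ᵀ) := by
    subst hS hShat
    rw [← hLam]
    simp only [transpose_add, transpose_sub, Matrix.add_mul, Matrix.mul_add,
      Matrix.sub_mul, Matrix.mul_sub, smul_sub, smul_add]
    module
  have hpsd : (S - (1 / 2 : ℝ) • Shat).PosSemidef := by
    rw [key]
    have h1 : ((B - Lam) * A⁻¹ * (B - Lam)ᵀ).PosSemidef := by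
      have := hA.inv.posSemidef.mul_mul_conjTranspose_same (B - Lam)
      simpa using this
    refine PosSemidef.of_dotProduct_mulVec_nonneg ?_ (fun x => ?_)
    · show _ = _
      rw [conjTranspose_smul, h1.1.eq]
      norm_num
    · have := h1.dotProduct_mulVec_nonneg x
      simp only [star_trivial, transpose_sub] at this ⊢
      rw [smul_mulVec, dotProduct_smul, smul_eq_mul]
      nlinarith
  refine ⟨hpsd, fun x => ?_⟩
  have h0 := hpsd.dotProduct_mulVec_nonneg x
  have hx : x ⬝ᵥ (S - (1 / 2 : ℝ) • Shat).mulVec x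
      = x ⬝ᵥ S.mulVec x - (1 / 2 : ℝ) * (x ⬝ᵥ Shat.mulVec x) := by
    simp [sub_mulVec, smul_mulVec, dotProduct_sub, dotProduct_smul, smul_eq_mul]
  simp only [star_trivial] at h0
  linarith [hx ▸ h0]
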